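/- Let A ⊆ ℤ/Nℤ and let B be an allowed subset relative to A, with complement B' of cardinality N'. Let φ : B' → ℤ/N'ℤ be a bijection compatible with the induced cyclic actions, S_B the set of springs of B, and A' = φ(A ∩ B') ∪ φ(S_B). Then the map C ↦ φ(C ∩ B') is a bijection from {C ∈ 𝒫_A : B ⊆ C} onto 𝒫_{A'}. -/
import Mathlib


open scoped Classical
open MvPolynomial

set_option linter.unusedSectionVars false
set_option linter.unusedVariables false
set_option maxHeartbeats 1000000

/-- `B` is a *generating allowed subset* of `ℤ/Nℤ` relative to `A`:
either a singleton `{a}` with `a ∈ A`, or a pair `{k, k+1}` contained in a single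
interval of the partition of `ℤ/Nℤ` determined by `A` (equivalently, `k ∉ A`). -/
def GenAllowed {N : ℕ} [NeZero N] (A B : Finset (ZMod N)) : Prop :=
  (∃ a ∈ A, B = {a}) ∨ (∃ k : ZMod N, k ≠ k + 1 ∧ k ∉ A ∧ B = {k, k + 1})

/-- `B` is an *allowed subset* relative to `A`: a proper subset of `ℤ/Nℤ` admitting a
(possibly empty) partition into generating allowed subsets. -/
def IsAllowed {N : ℕ} [NeZero N] (A B : Finset (ZMod N)) : Prop :=
  B ≠ Finset.univ ∧ ∃ 𝒞 : Finset (Finset (ZMod N)),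
    (∀ C ∈ 𝒞, GenAllowed A C) ∧
    (𝒞 : Set (Finset (ZMod N))).PairwiseDisjoint id ∧
    𝒞.sup id = B

/-- The polynomial `P_A = Σ_{B allowed} Π_{i ∉ B} X_i`. -/
noncomputable def polyP {N : ℕ} [NeZero N] (A : Finset (ZMod N)) :
    MvPolynomial (ZMod N) ℤ :=
  ∑ B ∈ Finset.univ.filter (fun B => IsAllowed A B), ∏ i ∈ Bᶜ, X i

/-- `j` is a *spring* of `B` (relative to `A`): `j ∉ B` and some run
`{j+1, …, j+k} ⊆ B` (`k ≥ 1`) ends at an element `j+k ∈ A`. -/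
def IsSpring {N : ℕ} [NeZero N] (A B : Finset (ZMod N)) (j : ZMod N) : Prop :=
  j ∉ B ∧ ∃ k : ℕ, 1 ≤ k ∧
    (∀ l : ℕ, 1 ≤ l → l ≤ k → j + (l : ZMod N) ∈ B) ∧
    j + (k : ZMod N) ∈ A


namespace AuxAllowed

variable {N : ℕ} [NeZero N]

structure Witness (A C P : Finset (ZMod N)) : Prop where
  subC : P ⊆ C
  notA : ∀ k ∈ P, k ∉ A
  succ_mem : ∀ k ∈ P, k + 1 ∈ C
  succ_not : ∀ k ∈ P, k + 1 ∉ P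
  sing : ∀ x ∈ C, x ∉ P → (∀ k ∈ P, k + 1 ≠ x) → x ∈ A

lemma eq_univ_of_one_eq_zero (C : Finset (ZMod N)) (h1 : (1 : ZMod N) = 0)
    (x : ZMod N) (hx : x ∈ C) : C = Finset.univ := by
  have hall : ∀ a b : ZMod N, a = b := by
    intro a b
    have : a - b = (a - b) * 1 := by ring
    rw [h1, mul_zero] at this
    linear_combination this
  ext y
  simp only [Finset.mem_univ, iff_true]
  rwa [hall y x]

lemma witness_of_isAllowed {A C : Finset (ZMod N)} (h : IsAllowed A C) :
    ∃ P, Witness A C P := by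
  obtain ⟨hne, 𝒞, hgen, hdisj, hsup⟩ := h
  refine ⟨Finset.univ.filter
    (fun k => ∃ T ∈ 𝒞, T = ({k, k+1} : Finset (ZMod N)) ∧ k ∉ A ∧ k ≠ k + 1), ?_, ?_, ?_, ?_, ?_⟩
  · intro k hk
    rw [Finset.mem_filter] at hk
    obtain ⟨-, T, hT, rfl, -, -⟩ := hk
    rw [← hsup]
    exact (Finset.le_sup (f := id) hT) (by simp)
  · intro k hk
    rw [Finset.mem_filter] at hk
    exact hk.2.choose_spec.2.2.1
  · intro k hk
    rw [Finset.mem_filter] at hk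
    obtain ⟨-, T, hT, rfl, -, -⟩ := hk
    rw [← hsup]
    exact (Finset.le_sup (f := id) hT) (by simp)
  · intro k hk hk1
    rw [Finset.mem_filter] at hk hk1
    obtain ⟨-, T, hT, hTe, hkA, hkne⟩ := hk
    obtain ⟨-, T', hT', hTe', hkA', hkne'⟩ := hk1
    have hmemT : (k + 1) ∈ T := by rw [hTe]; simp
    have hmemT' : (k + 1) ∈ T' := by rw [hTe']; simp
    have hTT : T = T' := by
      by_contra hne'
      exact Finset.disjoint_left.mp (hdisj hT hT' hne') hmemT hmemT'
    have hkT' : k ∈ T' := by rw [← hTT, hTe]; simp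
    rw [hTe'] at hkT'
    simp only [Finset.mem_insert, Finset.mem_singleton] at hkT'
    rcases hkT' with h1 | h2
    · exact hkne h1
    · have h2' : ((2:ℕ) : ZMod N) = 0 := by push_cast; linear_combination -h2
      have hdvd : N ∣ 2 := (ZMod.natCast_eq_zero_iff 2 N).mp h2'
      have hN1 : N ≠ 1 := by
        rintro rfl
        exact hkne (Subsingleton.elim _ _)
      have hN2 : N = 2 := by
        rcases (Nat.dvd_prime Nat.prime_two).mp hdvd with h | h
        · exact absurd h hN1
        · exact h
      have hcardT : T.card = 2 := by
        rw [hTe, Finset.card_insert_of_notMem (by simpa using hkne), Finset.card_singleton]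
      have hTuniv : T = Finset.univ := by
        apply Finset.eq_univ_of_card
        rw [hcardT, ZMod.card N, hN2]
      apply hne
      apply Finset.eq_univ_of_card
      refine le_antisymm (Finset.card_le_univ C) ?_
      have hsub : T ⊆ C := by rw [← hsup]; exact Finset.le_sup (f := id) hT
      calc Fintype.card (ZMod N) = T.card := by rw [hTuniv]; simp [Finset.card_univ]
        _ ≤ C.card := Finset.card_le_card hsub
  · intro x hx hxP hxk
    rw [← hsup] at hx
    rw [Finset.mem_sup] at hx
    obtain ⟨T, hT, hxT⟩ := hx
    rcases hgen T hT with ⟨a, haA, hTe⟩ | ⟨k, hkne, hkA, hTe⟩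
    · rw [hTe] at hxT
      simp only [id, Finset.mem_singleton] at hxT
      rwa [hxT]
    · rw [hTe] at hxT
      simp only [id, Finset.mem_insert, Finset.mem_singleton] at hxT
      rcases hxT with rfl | rfl
      · exact absurd (Finset.mem_filter.mpr ⟨Finset.mem_univ _, T, hT, hTe, hkA, hkne⟩) hxP
      · exact absurd rfl (hxk k (Finset.mem_filter.mpr ⟨Finset.mem_univ _, T, hT, hTe, hkA, hkne⟩))

end AuxAllowed

namespace AuxAllowed
variable {N : ℕ} [NeZero N]

lemma isAllowed_of_witness {A C P : Finset (ZMod N)} (hne : C ≠ Finset.univ)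
    (hW : Witness A C P) : IsAllowed A C := by
  have hkne : ∀ k ∈ P, k ≠ k + 1 := by
    intro k hk heq
    have h1 : (1 : ZMod N) = 0 := by linear_combination -heq
    exact hne (eq_univ_of_one_eq_zero C h1 k (hW.subC hk))
  classical
  set S := C.filter (fun x => x ∉ P ∧ ∀ k ∈ P, k + 1 ≠ x) with hSdef
  refine ⟨hne, (P.image fun k => ({k, k+1} : Finset (ZMod N))) ∪
      (S.image fun a => ({a} : Finset (ZMod N))), ?_, ?_, ?_⟩
  · intro T hT
    rw [Finset.mem_union] at hT
    rcases hT with hT | hT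
    · rw [Finset.mem_image] at hT
      obtain ⟨k, hk, rfl⟩ := hT
      exact Or.inr ⟨k, hkne k hk, hW.notA k hk, rfl⟩
    · rw [Finset.mem_image] at hT
      obtain ⟨a, ha, rfl⟩ := hT
      rw [hSdef, Finset.mem_filter] at ha
      exact Or.inl ⟨a, hW.sing a ha.1 ha.2.1 ha.2.2, rfl⟩
  · intro T₁ h₁ T₂ h₂ hne'
    simp only [Finset.coe_union, Set.mem_union, Finset.coe_image, Set.mem_image,
      Finset.mem_coe] at h₁ h₂
    have hdj : Disjoint T₁ T₂ := by
      refine Finset.disjoint_left.mpr ?_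
      intro x hx1 hx2
      have hSfact : ∀ a, a ∈ S → a ∉ P ∧ ∀ k ∈ P, k + 1 ≠ a := by
        intro a ha
        rw [hSdef, Finset.mem_filter] at ha
        exact ha.2
      rcases h₁ with ⟨k, hk, rfl⟩ | ⟨a, ha, rfl⟩ <;>
        rcases h₂ with ⟨k', hk', rfl⟩ | ⟨a', ha', rfl⟩
      · simp only [Finset.mem_insert, Finset.mem_singleton] at hx1 hx2
        rcases hx1 with rfl | rfl <;> rcases hx2 with h | h
        · exact hne' (by rw [h])
        · exact hW.succ_not k' hk' (h ▸ hk)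
        · exact hW.succ_not k hk (h ▸ hk')
        · exact hne' (by rw [add_right_cancel h])
      · simp only [Finset.mem_insert, Finset.mem_singleton] at hx1 hx2
        subst hx2
        rcases hx1 with rfl | h
        · exact (hSfact _ ha').1 hk
        · exact (hSfact _ ha').2 k hk h.symm
      · simp only [Finset.mem_insert, Finset.mem_singleton] at hx1 hx2
        subst hx1
        rcases hx2 with rfl | h
        · exact (hSfact _ ha).1 hk'
        · exact (hSfact _ ha).2 k' hk' h.symm
      · simp only [Finset.mem_singleton] at hx1 hx2
        subst hx1; subst hx2
        exact hne' rfl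
    exact hdj
  · ext x
    rw [Finset.mem_sup]
    constructor
    · rintro ⟨T, hT, hxT⟩
      rw [Finset.mem_union] at hT
      rcases hT with hT | hT
      · rw [Finset.mem_image] at hT
        obtain ⟨k, hk, rfl⟩ := hT
        simp only [id, Finset.mem_insert, Finset.mem_singleton] at hxT
        rcases hxT with rfl | rfl
        · exact hW.subC hk
        · exact hW.succ_mem k hk
      · rw [Finset.mem_image] at hT
        obtain ⟨a, ha, rfl⟩ := hT
        simp only [id, Finset.mem_singleton] at hxT
        subst hxT
        rw [hSdef, Finset.mem_filter] at ha
        exact ha.1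
    · intro hx
      by_cases hxP : x ∈ P
      · refine ⟨{x, x+1}, ?_, by simp⟩
        rw [Finset.mem_union]
        exact Or.inl (Finset.mem_image.mpr ⟨x, hxP, rfl⟩)
      · by_cases hxk : ∃ k ∈ P, k + 1 = x
        · obtain ⟨k, hk, hkx⟩ := hxk
          refine ⟨{k, k+1}, ?_, by rw [hkx]; simp⟩
          rw [Finset.mem_union]
          exact Or.inl (Finset.mem_image.mpr ⟨k, hk, rfl⟩)
        · push_neg at hxk
          refine ⟨{x}, ?_, by simp⟩
          rw [Finset.mem_union]
          refine Or.inr (Finset.mem_image.mpr ⟨x, ?_, rfl⟩)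
          rw [hSdef, Finset.mem_filter]
          exact ⟨hx, hxP, hxk⟩

end AuxAllowed

namespace AuxAllowed
variable {N : ℕ} [NeZero N]

def covSeq (A C : Finset (ZMod N)) (j : ZMod N) : ℕ → Prop
  | 0 => False
  | n+1 => (j + (n : ZMod N) ∈ C) ∧ ¬ covSeq A C j n ∧ j + (n : ZMod N) ∉ A

lemma covSeq_succ (A C : Finset (ZMod N)) (j : ZMod N) (n : ℕ) :
    covSeq A C j (n+1) ↔
      (j + (n : ZMod N) ∈ C ∧ ¬ covSeq A C j n ∧ j + (n : ZMod N) ∉ A) :=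
  Iff.rfl

def AllowCond (A C : Finset (ZMod N)) : Prop :=
  ∀ j ∉ C, ∀ n : ℕ, covSeq A C j n → j + (n : ZMod N) ∈ C

lemma covSeq_iff_of_witness {A C P : Finset (ZMod N)} (hW : Witness A C P)
    {j : ZMod N} (hj : j ∉ C) :
    ∀ n : ℕ, covSeq A C j n ↔ ∃ k ∈ P, k + 1 = j + (n : ZMod N) := by
  intro n
  induction n with
  | zero =>
    simp only [covSeq, Nat.cast_zero, add_zero]
    constructor
    · exact fun h => h.elim
    · rintro ⟨k, hk, hkj⟩
      exact absurd (hkj ▸ hW.succ_mem k hk) hj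
  | succ n ih =>
    rw [covSeq_succ]
    constructor
    · rintro ⟨hmem, hncov, hnA⟩
      refine ⟨j + (n : ZMod N), ?_, by push_cast; ring⟩
      by_contra hP
      exact hnA (hW.sing _ hmem hP (fun k hk hkx => hncov (ih.mpr ⟨k, hk, hkx⟩)))
    · rintro ⟨k, hk, hkj⟩
      have hkn : k = j + (n : ZMod N) := by
        have h : k + 1 = j + (n : ZMod N) + 1 := by rw [hkj]; push_cast; ring
        exact add_right_cancel h
      refine ⟨hkn ▸ hW.subC hk, ?_, hkn ▸ hW.notA k hk⟩
      intro hcov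
      obtain ⟨k', hk', hk'j⟩ := ih.mp hcov
      exact hW.succ_not k' hk' (by rw [hk'j, ← hkn]; exact hk)

lemma allowCond_of_witness {A C P : Finset (ZMod N)} (hW : Witness A C P) :
    AllowCond A C := by
  intro j hj n hcov
  obtain ⟨k, hk, hkj⟩ := (covSeq_iff_of_witness hW hj n).mp hcov
  exact hkj ▸ hW.succ_mem k hk

lemma witness_of_allowCond {A C : Finset (ZMod N)} (hne : C ≠ Finset.univ)
    (hcond : AllowCond A C) : ∃ P, Witness A C P := by
  have hex : ∃ j₀, j₀ ∉ C := by
    by_contra h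
    push_neg at h
    exact hne (Finset.eq_univ_iff_forall.mpr h)
  obtain ⟨j₀, hj₀⟩ := hex
  classical
  set covAt : ZMod N → Prop := fun x => covSeq A C j₀ ((x - j₀).val) with hcovAt
  have fact1 : ∀ x : ZMod N, j₀ + (((x - j₀).val : ℕ) : ZMod N) = x := by
    intro x
    rw [ZMod.natCast_zmod_val]
    ring
  refine ⟨C.filter (fun x => x ∉ A ∧ ¬ covAt x), ?_, ?_, ?_, ?_, ?_⟩
  · exact Finset.filter_subset _ _
  · intro k hk; exact (Finset.mem_filter.mp hk).2.1
  · intro k hk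
    rw [Finset.mem_filter] at hk
    obtain ⟨hkC, hkA, hkcov⟩ := hk
    have hcov1 : covSeq A C j₀ ((k - j₀).val + 1) := by
      rw [covSeq_succ, fact1]
      exact ⟨hkC, hkcov, hkA⟩
    have := hcond j₀ hj₀ _ hcov1
    rwa [Nat.cast_add, Nat.cast_one, ← add_assoc, fact1] at this
  · intro k hk hk1
    rw [Finset.mem_filter] at hk hk1
    obtain ⟨hkC, hkA, hkcov⟩ := hk
    obtain ⟨hk1C, hk1A, hk1cov⟩ := hk1
    have hcov1 : covSeq A C j₀ ((k - j₀).val + 1) := by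
      rw [covSeq_succ, fact1]
      exact ⟨hkC, hkcov, hkA⟩
    apply hk1cov
    have hval : ((k + 1) - j₀).val = (k - j₀).val + 1 := by
      have hlt : (k - j₀).val + 1 < N := by
        rcases lt_or_eq_of_le (Nat.succ_le_of_lt (ZMod.val_lt (k - j₀))) with h | h
        · exact h
        · exfalso
          rw [Nat.succ_eq_add_one] at h
          have : ((k + 1) - j₀) = (((k - j₀).val + 1 : ℕ) : ZMod N) := by
            push_cast
            rw [ZMod.natCast_zmod_val]
            ring
          rw [h, ZMod.natCast_self] at this
          have : k + 1 = j₀ := by linear_combination this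
          rw [this] at hk1C
          exact hj₀ hk1C
      have : ((k + 1) - j₀) = (((k - j₀).val + 1 : ℕ) : ZMod N) := by
        push_cast
        rw [ZMod.natCast_zmod_val]
        ring
      rw [this, ZMod.val_cast_of_lt hlt]
    rw [hcovAt]
    simp only
    rw [hval]
    exact hcov1
  · intro x hx hxP hxk
    by_contra hxA
    have hxcov : covAt x := by
      by_contra hc
      exact hxP (Finset.mem_filter.mpr ⟨hx, hxA, hc⟩)
    have hm : (x - j₀).val ≠ 0 := by
      intro h0
      have hx0 : x - j₀ = 0 := (ZMod.val_eq_zero _).mp h0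
      have : x = j₀ := by linear_combination hx0
      rw [this] at hx
      exact hj₀ hx
    obtain ⟨m', hm'⟩ := Nat.exists_eq_succ_of_ne_zero hm
    have hxcov2 : covSeq A C j₀ (m' + 1) := by
      rw [← Nat.succ_eq_add_one, ← hm']
      exact hxcov
    rw [covSeq_succ] at hxcov2
    obtain ⟨hmC, hmcov, hmA⟩ := hxcov2
    set k := j₀ + (m' : ZMod N) with hkdef
    have hkP : k ∈ C.filter (fun x => x ∉ A ∧ ¬ covAt x) := by
      rw [Finset.mem_filter]
      refine ⟨hmC, hmA, ?_⟩
      rw [hcovAt]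
      simp only
      have hval : (k - j₀).val = m' := by
        have h1 : k - j₀ = ((m' : ℕ) : ZMod N) := by rw [hkdef]; ring
        have h2 : m' < N := by
          have := ZMod.val_lt (x - j₀)
          omega
        rw [h1, ZMod.val_cast_of_lt h2]
      rw [hval]
      exact hmcov
    apply hxk k hkP
    have : j₀ + ((m' + 1 : ℕ) : ZMod N) = x := by
      rw [← Nat.succ_eq_add_one, ← hm', fact1]
    rw [← this, hkdef]
    push_cast
    ring

end AuxAllowed

namespace AuxAllowed
variable {N : ℕ} [NeZero N]

theorem isAllowed_iff {A C : Finset (ZMod N)} :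
    IsAllowed A C ↔ (C ≠ Finset.univ ∧ AllowCond A C) := by
  constructor
  · intro h
    obtain ⟨P, hP⟩ := witness_of_isAllowed h
    exact ⟨h.1, allowCond_of_witness hP⟩
  · rintro ⟨h1, h2⟩
    obtain ⟨P, hP⟩ := witness_of_allowCond h1 h2
    exact isAllowed_of_witness h1 hP

lemma stpEx (B : Finset (ZMod N)) (hBu : B ≠ Finset.univ) (x : ZMod N) :
    ∃ t : ℕ, 1 ≤ t ∧ x + (t : ZMod N) ∈ Bᶜ := by
  have hex : ∃ w, w ∉ B := by
    by_contra h
    push_neg at h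
    exact hBu (Finset.eq_univ_iff_forall.mpr h)
  obtain ⟨w, hw⟩ := hex
  by_cases hwx : w = x
  · refine ⟨N, NeZero.one_le, ?_⟩
    rw [ZMod.natCast_self, add_zero, Finset.mem_compl, ← hwx]
    exact hw
  · refine ⟨(w - x).val, ?_, ?_⟩
    · have : (w - x).val ≠ 0 := by
        intro h0
        have : w - x = 0 := (ZMod.val_eq_zero _).mp h0
        exact hwx (by linear_combination this)
      omega
    · rw [ZMod.natCast_zmod_val, Finset.mem_compl]
      have : x + (w - x) = w := by ring
      rw [this]
      exact hw

noncomputable def stp (B : Finset (ZMod N)) (hBu : B ≠ Finset.univ) (x : ZMod N) : ℕ :=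
  Nat.find (stpEx B hBu x)

lemma stp_pos (B : Finset (ZMod N)) (hBu : B ≠ Finset.univ) (x : ZMod N) :
    1 ≤ stp B hBu x := (Nat.find_spec (stpEx B hBu x)).1

lemma stp_mem (B : Finset (ZMod N)) (hBu : B ≠ Finset.univ) (x : ZMod N) :
    x + (stp B hBu x : ZMod N) ∈ Bᶜ := (Nat.find_spec (stpEx B hBu x)).2

lemma stp_mid (B : Finset (ZMod N)) (hBu : B ≠ Finset.univ) (x : ZMod N) :
    ∀ l : ℕ, 1 ≤ l → l < stp B hBu x → x + (l : ZMod N) ∈ B := by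
  intro l hl1 hl2
  have := Nat.find_min (stpEx B hBu x) hl2
  push_neg at this
  have := this hl1
  rwa [Finset.mem_compl, not_not] at this

end AuxAllowed

namespace AuxAllowed
variable {N : ℕ} [NeZero N]


section Run

variable (A B D : Finset (ZMod N)) (hBu : B ≠ Finset.univ)

lemma covB_one_false (x : ZMod N) (hx : x ∈ Bᶜ) : ¬ covSeq A B x 1 := by
  rw [covSeq_succ]
  rintro ⟨hxB, -, -⟩
  rw [Nat.cast_zero, add_zero] at hxB
  exact (Finset.mem_compl.mp hx) hxB

lemma covB_stp_false (hBcond : AllowCond A B) (x : ZMod N) (hx : x ∈ Bᶜ) : ¬ covSeq A B x (stp B hBu x) := by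
  intro h
  have := hBcond x (Finset.mem_compl.mp hx) _ h
  exact (Finset.mem_compl.mp (stp_mem B hBu x)) this

lemma run_iff_notentry (j x : ZMod N) (n : ℕ) (hx : x ∈ Bᶜ)
    (hxn : x = j + (n : ZMod N)) (hentry : ¬ covSeq A (B ∪ D) j (n+1)) :
    ∀ m, 1 ≤ m → m ≤ stp B hBu x →
      (covSeq A (B ∪ D) j (n+m) ↔ covSeq A B x m) := by
  intro m hm1 hms
  induction m, hm1 using Nat.le_induction with
  | base =>
    exact iff_of_false hentry (covB_one_false A B x hx)
  | succ m hm1 ih =>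
    have hms' : m ≤ stp B hBu x := Nat.le_of_succ_le hms
    have hmid : x + (m : ZMod N) ∈ B := stp_mid B hBu x m hm1 (by omega)
    have heq : j + ((n + m : ℕ) : ZMod N) = x + (m : ZMod N) := by
      rw [hxn]; push_cast; ring
    have h1 : covSeq A (B ∪ D) j (n+(m+1)) ↔
        (x + (m : ZMod N) ∈ B ∪ D ∧ ¬ covSeq A (B ∪ D) j (n+m) ∧ x + (m : ZMod N) ∉ A) := by
      rw [show n + (m+1) = (n+m)+1 from rfl, covSeq_succ, heq]
    have h2 : covSeq A B x (m+1) ↔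
        (x + (m : ZMod N) ∈ B ∧ ¬ covSeq A B x m ∧ x + (m : ZMod N) ∉ A) := covSeq_succ ..
    rw [h1, h2]
    have hm2 : x + (m : ZMod N) ∈ B ∪ D := Finset.mem_union_left _ hmid
    rw [ih hms']
    exact ⟨fun h => ⟨hmid, h.2.1, h.2.2⟩, fun h => ⟨hm2, h.2.1, h.2.2⟩⟩

lemma run_exit_notentry (hBcond : AllowCond A B) (j x : ZMod N) (n : ℕ) (hx : x ∈ Bᶜ)
    (hxn : x = j + (n : ZMod N)) (hentry : ¬ covSeq A (B ∪ D) j (n+1)) :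
    ¬ covSeq A (B ∪ D) j (n + stp B hBu x) := by
  rw [run_iff_notentry A B D hBu j x n hx hxn hentry _ (stp_pos B hBu x) le_rfl]
  exact covB_stp_false A B hBu hBcond x hx

lemma run_exit_entry (hBcond : AllowCond A B) (j x : ZMod N) (n : ℕ) (hx : x ∈ Bᶜ)
    (hxn : x = j + (n : ZMod N)) (hentry : covSeq A (B ∪ D) j (n+1)) :
    (covSeq A (B ∪ D) j (n + stp B hBu x) ↔ ¬ IsSpring A B x) := by
  have hxB : x ∉ B := Finset.mem_compl.mp hx
  have hinv : ∀ m, 1 ≤ m → m ≤ stp B hBu x →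
      (((covSeq A (B ∪ D) j (n+m) ↔ ¬ covSeq A B x m) ∧
        (∀ l : ℕ, 1 ≤ l → l < m → x + (l : ZMod N) ∉ A)) ∨
       ((covSeq A (B ∪ D) j (n+m) ↔ covSeq A B x m) ∧ IsSpring A B x)) := by
    intro m hm1 hms
    induction m, hm1 using Nat.le_induction with
    | base =>
      left
      constructor
      · exact iff_of_true hentry (covB_one_false A B x hx)
      · intro l hl1 hl2; omega
    | succ m hm1 ih =>
      have hms' : m ≤ stp B hBu x := Nat.le_of_succ_le hms
      have hmid : x + (m : ZMod N) ∈ B := stp_mid B hBu x m hm1 (by omega)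
      have heq : j + ((n + m : ℕ) : ZMod N) = x + (m : ZMod N) := by
        rw [hxn]; push_cast; ring
      have h1 : covSeq A (B ∪ D) j (n+(m+1)) ↔
          (x + (m : ZMod N) ∈ B ∪ D ∧ ¬ covSeq A (B ∪ D) j (n+m) ∧
            x + (m : ZMod N) ∉ A) := by
        rw [show n + (m+1) = (n+m)+1 from rfl, covSeq_succ, heq]
      have h2 : covSeq A B x (m+1) ↔
          (x + (m : ZMod N) ∈ B ∧ ¬ covSeq A B x m ∧ x + (m : ZMod N) ∉ A) := covSeq_succ ..
      have hm2 : x + (m : ZMod N) ∈ B ∪ D := Finset.mem_union_left _ hmid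
      rcases ih hms' with ⟨hiff, hAs⟩ | ⟨hiff, hspring⟩
      · by_cases hA : x + (m : ZMod N) ∈ A
        · right
          constructor
          · rw [h1, h2]
            exact iff_of_false (fun h => h.2.2 hA) (fun h => h.2.2 hA)
          · refine ⟨hxB, m, hm1, ?_, hA⟩
            intro l hl1 hl2
            exact stp_mid B hBu x l hl1 (by omega)
        · left
          constructor
          · rw [h1, h2]
            constructor
            · rintro ⟨-, hc, -⟩
              exact fun hb => hb.2.1 (not_not.mp (fun hnb => hc (hiff.mpr hnb)))
            · intro h
              refine ⟨hm2, ?_, hA⟩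
              intro hcC
              exact h ⟨hmid, hiff.mp hcC, hA⟩
          · intro l hl1 hl2
            rcases Nat.lt_succ_iff_lt_or_eq.mp hl2 with h | h
            · exact hAs l hl1 h
            · rw [h]; exact hA
      · right
        refine ⟨?_, hspring⟩
        rw [h1, h2]
        constructor
        · rintro ⟨-, hc, ha⟩
          exact ⟨hmid, fun hb => hc (hiff.mpr hb), ha⟩
        · rintro ⟨-, hc, ha⟩
          exact ⟨hm2, fun hb => hc (hiff.mp hb), ha⟩
  rcases hinv _ (stp_pos B hBu x) le_rfl with ⟨hiff, hAs⟩ | ⟨hiff, hspring⟩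
  · refine iff_of_true ?_ ?_
    · rw [hiff]; exact covB_stp_false A B hBu hBcond x hx
    · rintro ⟨-, k, hk1, hkB, hkA⟩
      have hkstp : k < stp B hBu x := by
        by_contra h
        push_neg at h
        have := hkB _ (stp_pos B hBu x) h
        exact (Finset.mem_compl.mp (stp_mem B hBu x)) this
      exact hAs k hk1 hkstp hkA
  · refine iff_of_false ?_ (not_not_intro hspring)
    rw [hiff]
    exact covB_stp_false A B hBu hBcond x hx

end Run
end AuxAllowed

namespace AuxAllowed
variable {N : ℕ} [NeZero N]

noncomputable def zseq (B : Finset (ZMod N)) (hBu : B ≠ Finset.univ) (j : ZMod N) : ℕ → ZMod N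
  | 0 => j
  | i+1 => zseq B hBu j i + (stp B hBu (zseq B hBu j i) : ZMod N)

noncomputable def nseq (B : Finset (ZMod N)) (hBu : B ≠ Finset.univ) (j : ZMod N) : ℕ → ℕ
  | 0 => 0
  | i+1 => nseq B hBu j i + stp B hBu (zseq B hBu j i)

lemma zseq_mem (B : Finset (ZMod N)) (hBu : B ≠ Finset.univ) (j : ZMod N) (hj : j ∈ Bᶜ) :
    ∀ i, zseq B hBu j i ∈ Bᶜ := by
  intro i
  induction i with
  | zero => exact hj
  | succ i ih => exact stp_mem B hBu (zseq B hBu j i)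

lemma zseq_eq (B : Finset (ZMod N)) (hBu : B ≠ Finset.univ) (j : ZMod N) :
    ∀ i, zseq B hBu j i = j + ((nseq B hBu j i : ℕ) : ZMod N) := by
  intro i
  induction i with
  | zero => simp [zseq, nseq]
  | succ i ih =>
    show zseq B hBu j i + _ = j + ((nseq B hBu j i + stp B hBu (zseq B hBu j i) : ℕ) : ZMod N)
    rw [ih]
    push_cast
    ring

lemma nseq_lt (B : Finset (ZMod N)) (hBu : B ≠ Finset.univ) (j : ZMod N) (i : ℕ) :
    nseq B hBu j i < nseq B hBu j (i+1) := by
  have := stp_pos B hBu (zseq B hBu j i)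
  show nseq B hBu j i < nseq B hBu j i + stp B hBu (zseq B hBu j i)
  omega

lemma exists_idx (B : Finset (ZMod N)) (hBu : B ≠ Finset.univ) (j : ZMod N) (m : ℕ) :
    ∃ i, nseq B hBu j i ≤ m ∧ m < nseq B hBu j (i+1) := by
  induction m with
  | zero =>
    exact ⟨0, Nat.le_refl _, by have := nseq_lt B hBu j 0; simpa [nseq] using this⟩
  | succ m ih =>
    obtain ⟨i, h1, h2⟩ := ih
    rcases lt_or_eq_of_le (Nat.succ_le_of_lt h2) with h | h
    · exact ⟨i, by omega, by omega⟩
    · refine ⟨i+1, by omega, ?_⟩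
      have := nseq_lt B hBu j (i+1)
      omega

end AuxAllowed

namespace AuxAllowed

section Simul

variable {N N' : ℕ} [NeZero N] [NeZero N']
variable (A B D : Finset (ZMod N)) (hBu : B ≠ Finset.univ) (hBcond : AllowCond A B)
variable (hD : D ⊆ Bᶜ) (φ : ZMod N → ZMod N')
variable (hbij : Set.BijOn φ (Bᶜ : Finset (ZMod N)) Set.univ)
variable (hcompat : ∀ x ∈ Bᶜ, ∀ j : ℕ, 1 ≤ j → x + (j : ZMod N) ∈ Bᶜ →
      (∀ l : ℕ, 1 ≤ l → l < j → x + (l : ZMod N) ∉ Bᶜ) →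
      φ (x + (j : ZMod N)) = φ x + 1)
variable (A' : Finset (ZMod N'))
variable (hA' : A' = (A ∩ Bᶜ).image φ ∪ (Bᶜ.filter (IsSpring A B)).image φ)

include hD hbij in
lemma mem_D'_iff (z : ZMod N) (hz : z ∈ Bᶜ) : φ z ∈ D.image φ ↔ z ∈ D := by
  constructor
  · intro h
    rw [Finset.mem_image] at h
    obtain ⟨w, hw, hwz⟩ := h
    have : w = z := hbij.2.1 (by exact_mod_cast Finset.mem_coe.mpr (hD hw))
      (Finset.mem_coe.mpr hz) hwz
    exact this ▸ hw
  · intro h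
    exact Finset.mem_image.mpr ⟨z, h, rfl⟩

include hbij hA' in
lemma mem_A'_iff (z : ZMod N) (hz : z ∈ Bᶜ) :
    φ z ∈ A' ↔ (z ∈ A ∨ IsSpring A B z) := by
  rw [hA', Finset.mem_union]
  constructor
  · rintro (h | h) <;> rw [Finset.mem_image] at h
    · obtain ⟨w, hw, hwz⟩ := h
      rw [Finset.mem_inter] at hw
      have : w = z := hbij.2.1 (Finset.mem_coe.mpr hw.2) (Finset.mem_coe.mpr hz) hwz
      exact Or.inl (this ▸ hw.1)
    · obtain ⟨w, hw, hwz⟩ := h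
      rw [Finset.mem_filter] at hw
      have : w = z := hbij.2.1 (Finset.mem_coe.mpr hw.1) (Finset.mem_coe.mpr hz) hwz
      exact Or.inr (this ▸ hw.2)
  · rintro (h | h)
    · exact Or.inl (Finset.mem_image.mpr ⟨z, Finset.mem_inter.mpr ⟨h, hz⟩, rfl⟩)
    · exact Or.inr (Finset.mem_image.mpr ⟨z, Finset.mem_filter.mpr ⟨hz, h⟩, rfl⟩)

include hcompat in
lemma phi_zseq (j : ZMod N) (hj : j ∈ Bᶜ) :
    ∀ i, φ (zseq B hBu j i) = φ j + (i : ZMod N') := by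
  intro i
  induction i with
  | zero => simp [zseq]
  | succ i ih =>
    have hz := zseq_mem B hBu j hj i
    have hstep := hcompat (zseq B hBu j i) hz (stp B hBu (zseq B hBu j i))
      (stp_pos B hBu _) (stp_mem B hBu _)
      (fun l hl1 hl2 hmem => (Finset.mem_compl.mp hmem) (stp_mid B hBu _ l hl1 hl2))
    show φ (zseq B hBu j i + _) = _
    rw [hstep, ih]
    push_cast
    ring

include hBu hBcond hD hbij hcompat hA' in
lemma trans_step (j : ZMod N) (hj : j ∈ Bᶜ) (hjD : j ∉ D) (i : ℕ)
    (hinv : covSeq A (B ∪ D) j (nseq B hBu j i) ↔ covSeq A' (D.image φ) (φ j) i)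
    (hside : zseq B hBu j i ∈ B ∪ D ∨ ¬ covSeq A (B ∪ D) j (nseq B hBu j i)) :
    (covSeq A (B ∪ D) j (nseq B hBu j (i+1)) ↔ covSeq A' (D.image φ) (φ j) (i+1)) := by
  set z := zseq B hBu j i with hzdef
  have hz : z ∈ Bᶜ := zseq_mem B hBu j hj i
  have hzeq : z = j + ((nseq B hBu j i : ℕ) : ZMod N) := zseq_eq B hBu j i
  have hphiz : φ z = φ j + (i : ZMod N') := phi_zseq B hBu φ hcompat j hj i
  have hq1 : covSeq A' (D.image φ) (φ j) (i+1) ↔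
      (φ z ∈ D.image φ ∧ ¬ covSeq A' (D.image φ) (φ j) i ∧ φ z ∉ A') := by
    rw [covSeq_succ, hphiz]
  have hnseq : nseq B hBu j (i+1) = nseq B hBu j i + stp B hBu z := rfl
  by_cases hzC : z ∈ B ∪ D
  · have hzD : z ∈ D := by
      rcases Finset.mem_union.mp hzC with h | h
      · exact absurd h (Finset.mem_compl.mp hz)
      · exact h
    have hzD' : φ z ∈ D.image φ := (mem_D'_iff B D hD φ hbij z hz).mpr hzD
    by_cases hR : covSeq A (B ∪ D) j (nseq B hBu j i)
    · -- z is covered; next is a start on both sides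
      have hentry : ¬ covSeq A (B ∪ D) j (nseq B hBu j i + 1) := by
        rw [covSeq_succ]
        rintro ⟨-, hnc, -⟩
        exact hnc hR
      have hnR : ¬ covSeq A (B ∪ D) j (nseq B hBu j (i+1)) := by
        rw [hnseq]
        exact run_exit_notentry A B D hBu hBcond j z _ hz hzeq hentry
      refine iff_of_false hnR ?_
      rw [hq1]
      rintro ⟨-, hq, -⟩
      exact hq (hinv.mp hR)
    · by_cases hzA : z ∈ A
      · have hentry : ¬ covSeq A (B ∪ D) j (nseq B hBu j i + 1) := by
          rw [covSeq_succ]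
          rintro ⟨-, -, hna⟩
          rw [← hzeq] at hna
          exact hna hzA
        have hnR : ¬ covSeq A (B ∪ D) j (nseq B hBu j (i+1)) := by
          rw [hnseq]
          exact run_exit_notentry A B D hBu hBcond j z _ hz hzeq hentry
        refine iff_of_false hnR ?_
        rw [hq1]
        rintro ⟨-, -, hna⟩
        exact hna ((mem_A'_iff A B φ hbij A' hA' z hz).mpr (Or.inl hzA))
      · -- the interesting case : pair started at z
        have hentry : covSeq A (B ∪ D) j (nseq B hBu j i + 1) := by
          rw [covSeq_succ, ← hzeq]
          exact ⟨hzC, hR, hzA⟩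
        have hRiff : covSeq A (B ∪ D) j (nseq B hBu j (i+1)) ↔ ¬ IsSpring A B z := by
          rw [hnseq]
          exact run_exit_entry A B D hBu hBcond j z _ hz hzeq hentry
        rw [hRiff, hq1]
        constructor
        · intro hns
          refine ⟨hzD', fun hq => hR (hinv.mpr hq), ?_⟩
          intro hA'mem
          rcases (mem_A'_iff A B φ hbij A' hA' z hz).mp hA'mem with h | h
          · exact hzA h
          · exact hns h
        · rintro ⟨-, -, hna⟩
          intro hspring
          exact hna ((mem_A'_iff A B φ hbij A' hA' z hz).mpr (Or.inr hspring))
  · -- z is a gap of C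
    have hnR : ¬ covSeq A (B ∪ D) j (nseq B hBu j i) := by
      rcases hside with h | h
      · exact absurd h hzC
      · exact h
    have hentry : ¬ covSeq A (B ∪ D) j (nseq B hBu j i + 1) := by
      rw [covSeq_succ]
      rintro ⟨hmem, -, -⟩
      rw [← hzeq] at hmem
      exact hzC hmem
    have hnR1 : ¬ covSeq A (B ∪ D) j (nseq B hBu j (i+1)) := by
      rw [hnseq]
      exact run_exit_notentry A B D hBu hBcond j z _ hz hzeq hentry
    refine iff_of_false hnR1 ?_
    rw [hq1]
    rintro ⟨hmem, -, -⟩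
    have hzD : z ∉ D := fun h => hzC (Finset.mem_union_right _ h)
    exact hzD ((mem_D'_iff B D hD φ hbij z hz).mp hmem)


include hBu hBcond hD hbij hcompat hA' in
lemma simul_inv_forward (j : ZMod N) (hj : j ∈ Bᶜ) (hjD : j ∉ D)
    (hreal : ∀ n : ℕ, covSeq A (B ∪ D) j n → j + (n : ZMod N) ∈ B ∪ D) :
    ∀ i, (covSeq A (B ∪ D) j (nseq B hBu j i) ↔ covSeq A' (D.image φ) (φ j) i) := by
  intro i
  induction i with
  | zero => exact iff_of_false (fun h => h) (fun h => h)
  | succ i ih =>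
    apply trans_step A B D hBu hBcond hD φ hbij hcompat A' hA' j hj hjD i ih
    by_cases hR : covSeq A (B ∪ D) j (nseq B hBu j i)
    · left
      have := hreal _ hR
      rwa [← zseq_eq] at this
    · exact Or.inr hR

include hBu hBcond hD hbij hcompat hA' in
lemma simul_forward (j : ZMod N) (hj : j ∈ Bᶜ) (hjD : j ∉ D)
    (hreal : ∀ n : ℕ, covSeq A (B ∪ D) j n → j + (n : ZMod N) ∈ B ∪ D) :
    ∀ m : ℕ, covSeq A' (D.image φ) (φ j) m → φ j + (m : ZMod N') ∈ D.image φ := by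
  intro m hq
  have hR : covSeq A (B ∪ D) j (nseq B hBu j m) :=
    (simul_inv_forward A B D hBu hBcond hD φ hbij hcompat A' hA' j hj hjD hreal m).mpr hq
  have hz := hreal _ hR
  rw [← zseq_eq] at hz
  have hzB' := zseq_mem B hBu j hj m
  have hzD : zseq B hBu j m ∈ D := by
    rcases Finset.mem_union.mp hz with h | h
    · exact absurd h (Finset.mem_compl.mp hzB')
    · exact h
  have hmem := (mem_D'_iff B D hD φ hbij _ hzB').mpr hzD
  rwa [phi_zseq B hBu φ hcompat j hj m] at hmem

include hBu hBcond hD hbij hcompat hA' in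
lemma simul_inv_backward (j : ZMod N) (hj : j ∈ Bᶜ) (hjD : j ∉ D)
    (hquot : ∀ m : ℕ, covSeq A' (D.image φ) (φ j) m → φ j + (m : ZMod N') ∈ D.image φ) :
    ∀ i, (covSeq A (B ∪ D) j (nseq B hBu j i) ↔ covSeq A' (D.image φ) (φ j) i) := by
  intro i
  induction i with
  | zero => exact iff_of_false (fun h => h) (fun h => h)
  | succ i ih =>
    apply trans_step A B D hBu hBcond hD φ hbij hcompat A' hA' j hj hjD i ih
    by_cases hR : covSeq A (B ∪ D) j (nseq B hBu j i)
    · left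
      have hq := ih.mp hR
      have := hquot i hq
      rw [← phi_zseq B hBu φ hcompat j hj i] at this
      have hzB' := zseq_mem B hBu j hj i
      exact Finset.mem_union_right _ ((mem_D'_iff B D hD φ hbij _ hzB').mp this)
    · exact Or.inr hR

include hBu hBcond hD hbij hcompat hA' in
lemma simul_backward (j : ZMod N) (hj : j ∈ Bᶜ) (hjD : j ∉ D)
    (hquot : ∀ m : ℕ, covSeq A' (D.image φ) (φ j) m → φ j + (m : ZMod N') ∈ D.image φ) :
    ∀ n : ℕ, covSeq A (B ∪ D) j n → j + (n : ZMod N) ∈ B ∪ D := by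
  intro n hc
  obtain ⟨i, h1, h2⟩ := exists_idx B hBu j n
  have hzB' := zseq_mem B hBu j hj i
  rcases eq_or_lt_of_le h1 with heq | hlt
  · have hR : covSeq A (B ∪ D) j (nseq B hBu j i) := by rwa [heq]
    have hq := (simul_inv_backward A B D hBu hBcond hD φ hbij hcompat A' hA'
      j hj hjD hquot i).mp hR
    have := hquot i hq
    rw [← phi_zseq B hBu φ hcompat j hj i] at this
    have hzD : zseq B hBu j i ∈ D := (mem_D'_iff B D hD φ hbij _ hzB').mp this
    have : j + ((n : ℕ) : ZMod N) = zseq B hBu j i := by rw [zseq_eq B hBu j i, heq]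
    rw [this]
    exact Finset.mem_union_right _ hzD
  · have h2' : n < nseq B hBu j i + stp B hBu (zseq B hBu j i) := h2
    have hmid := stp_mid B hBu (zseq B hBu j i) (n - nseq B hBu j i) (by omega) (by omega)
    have heq2 : j + ((n : ℕ) : ZMod N) =
        zseq B hBu j i + (((n - nseq B hBu j i : ℕ)) : ZMod N) := by
      rw [zseq_eq B hBu j i]
      push_cast [Nat.cast_sub h1]
      ring
    rw [heq2]
    exact Finset.mem_union_left _ hmid

include hBu hBcond hD hbij hcompat hA' in
lemma isAllowed_transfer :
    IsAllowed A (B ∪ D) ↔ IsAllowed A' (D.image φ) := by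
  rw [isAllowed_iff, isAllowed_iff]
  have huniv : (B ∪ D = Finset.univ) ↔ (D.image φ = Finset.univ) := by
    constructor
    · intro h
      apply Finset.eq_univ_iff_forall.mpr
      intro y
      obtain ⟨z, hz, rfl⟩ := hbij.2.2 (Set.mem_univ y)
      have hzB : z ∈ Bᶜ := by exact_mod_cast hz
      have hzD : z ∈ D := by
        have : z ∈ B ∪ D := h ▸ Finset.mem_univ z
        rcases Finset.mem_union.mp this with h' | h'
        · exact absurd h' (Finset.mem_compl.mp hzB)
        · exact h'
      exact Finset.mem_image.mpr ⟨z, hzD, rfl⟩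
    · intro h
      apply Finset.eq_univ_iff_forall.mpr
      intro x
      by_cases hxB : x ∈ B
      · exact Finset.mem_union_left _ hxB
      · have hxB' : x ∈ Bᶜ := Finset.mem_compl.mpr hxB
        have : φ x ∈ D.image φ := h ▸ Finset.mem_univ (φ x)
        exact Finset.mem_union_right _ ((mem_D'_iff B D hD φ hbij x hxB').mp this)
  constructor
  · rintro ⟨hne, hcond⟩
    refine ⟨fun h => hne (huniv.mpr h), ?_⟩
    intro j' hj' m hq
    obtain ⟨z, hz, rfl⟩ := hbij.2.2 (Set.mem_univ j')
    have hzB : z ∈ Bᶜ := by exact_mod_cast hz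
    have hzD : z ∉ D := fun h => hj' ((mem_D'_iff B D hD φ hbij z hzB).mpr h)
    have hzC : z ∉ B ∪ D := by
      rw [Finset.mem_union]
      rintro (h | h)
      · exact (Finset.mem_compl.mp hzB) h
      · exact hzD h
    exact simul_forward A B D hBu hBcond hD φ hbij hcompat A' hA' z hzB hzD
      (hcond z hzC) m hq
  · rintro ⟨hne, hcond⟩
    refine ⟨fun h => hne (huniv.mp h), ?_⟩
    intro j hj n hc
    have hjB : j ∈ Bᶜ := Finset.mem_compl.mpr (fun h => hj (Finset.mem_union_left _ h))
    have hjD : j ∉ D := fun h => hj (Finset.mem_union_right _ h)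
    have hj' : φ j ∉ D.image φ := fun h => hjD ((mem_D'_iff B D hD φ hbij j hjB).mp h)
    exact simul_backward A B D hBu hBcond hD φ hbij hcompat A' hA' j hjB hjD
      (fun m hq => hcond (φ j) hj' m hq) n hc

end Simul
end AuxAllowed


/-- Let `A ⊆ ℤ/Nℤ`, `B` an allowed subset relative to `A` with
complement `B'` of cardinality `N'`, and `φ : B' → ℤ/N'ℤ` a bijection compatible with
the induced cyclic actions.  With `A' = φ(A ∩ B') ∪ φ(S_B)` (`S_B` the set of springs
of `B`), the map `C ↦ φ(C ∩ B')` is a bijection from `{C ∈ 𝒫_A : B ⊆ C}` onto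
`𝒫_{A'}`. -/
theorem allowed_subsets_containing_bijection
    (N N' : ℕ) [NeZero N] [NeZero N'] (A B : Finset (ZMod N))
    (hB : IsAllowed A B) (hN' : N' = Bᶜ.card)
    (φ : ZMod N → ZMod N')
    (hbij : Set.BijOn φ (Bᶜ : Finset (ZMod N)) Set.univ)
    (hcompat : ∀ x ∈ Bᶜ, ∀ j : ℕ, 1 ≤ j → x + (j : ZMod N) ∈ Bᶜ →
      (∀ l : ℕ, 1 ≤ l → l < j → x + (l : ZMod N) ∉ Bᶜ) →
      φ (x + (j : ZMod N)) = φ x + 1)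
    (A' : Finset (ZMod N'))
    (hA' : A' = (A ∩ Bᶜ).image φ ∪ (Bᶜ.filter (IsSpring A B)).image φ) :
    Set.BijOn (fun C : Finset (ZMod N) => (C ∩ Bᶜ).image φ)
      {C : Finset (ZMod N) | IsAllowed A C ∧ B ⊆ C}
      {C' : Finset (ZMod N') | IsAllowed A' C'} := by
  obtain ⟨hBu, hBcond⟩ := AuxAllowed.isAllowed_iff.mp hB
  have transfer : ∀ D : Finset (ZMod N), D ⊆ Bᶜ →
      (IsAllowed A (B ∪ D) ↔ IsAllowed A' (D.image φ)) := fun D hD =>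
    AuxAllowed.isAllowed_transfer A B D hBu hBcond hD φ hbij hcompat A' hA'
  refine ⟨?_, ?_, ?_⟩
  · -- MapsTo
    intro C hC
    obtain ⟨hCa, hBC⟩ := hC
    have hCeq : B ∪ (C ∩ Bᶜ) = C := by
      ext x
      simp only [Finset.mem_union, Finset.mem_inter, Finset.mem_compl]
      constructor
      · rintro (h | ⟨h, -⟩)
        · exact hBC h
        · exact h
      · intro h
        by_cases hxB : x ∈ B
        · exact Or.inl hxB
        · exact Or.inr ⟨h, hxB⟩
    show IsAllowed A' ((C ∩ Bᶜ).image φ)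
    exact (transfer (C ∩ Bᶜ) Finset.inter_subset_right).mp (by rwa [hCeq])
  · -- InjOn
    have hsub : ∀ C₁ C₂ : Finset (ZMod N),
        (C₁ ∩ Bᶜ).image φ = (C₂ ∩ Bᶜ).image φ → ∀ x ∈ Bᶜ, x ∈ C₁ → x ∈ C₂ := by
      intro C₁ C₂ heq x hx hx1
      have himg : φ x ∈ (C₂ ∩ Bᶜ).image φ := by
        rw [← heq]
        exact Finset.mem_image.mpr ⟨x, Finset.mem_inter.mpr ⟨hx1, hx⟩, rfl⟩
      obtain ⟨w, hw, hwx⟩ := Finset.mem_image.mp himg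
      have hwB : w ∈ Bᶜ := (Finset.mem_inter.mp hw).2
      have hwe : w = x := hbij.2.1 (Finset.mem_coe.mpr hwB) (Finset.mem_coe.mpr hx) hwx
      exact hwe ▸ (Finset.mem_inter.mp hw).1
    intro C₁ h₁ C₂ h₂ heq
    have heq' : (C₁ ∩ Bᶜ).image φ = (C₂ ∩ Bᶜ).image φ := heq
    ext x
    by_cases hxB : x ∈ B
    · simp only [h₁.2 hxB, h₂.2 hxB]
    · have hx : x ∈ Bᶜ := Finset.mem_compl.mpr hxB
      exact ⟨hsub C₁ C₂ heq' x hx, hsub C₂ C₁ heq'.symm x hx⟩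
  · -- SurjOn
    intro C' hC'
    have hC'a : IsAllowed A' C' := hC'
    classical
    set D := Bᶜ.filter (fun x => φ x ∈ C') with hDdef
    have hD : D ⊆ Bᶜ := Finset.filter_subset _ _
    have hDim : D.image φ = C' := by
      ext y
      constructor
      · intro hy
        obtain ⟨z, hz, rfl⟩ := Finset.mem_image.mp hy
        exact (Finset.mem_filter.mp hz).2
      · intro hy
        obtain ⟨z, hz, rfl⟩ := hbij.2.2 (Set.mem_univ y)
        have hzB : z ∈ Bᶜ := by exact_mod_cast hz
        exact Finset.mem_image.mpr ⟨z, Finset.mem_filter.mpr ⟨hzB, hy⟩, rfl⟩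
    have hint : (B ∪ D) ∩ Bᶜ = D := by
      ext x
      simp only [Finset.mem_inter, Finset.mem_union, Finset.mem_compl]
      constructor
      · rintro ⟨h1 | h1, h2⟩
        · exact absurd h1 h2
        · exact h1
      · intro h
        exact ⟨Or.inr h, Finset.mem_compl.mp (hD h)⟩
    refine ⟨B ∪ D, ?_, ?_⟩
    · refine ⟨?_, Finset.subset_union_left⟩
      exact (transfer D hD).mpr (hDim ▸ hC'a)
    · show ((B ∪ D) ∩ Bᶜ).image φ = C'
      rw [hint, hDim]
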